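/- Let σ be a connected skew shape with height a and width b, and let μ be any toggle-symmetric probability distribution on J(σ). Then the expected cardinality of the antichain of maximal elements of a μ-random order ideal satisfies E_μ(#A(I)) = (ab/(a+b))·(1 + Σ_{c ∈ C(σ)} δ(c)·P_μ(c)). -/

import Mathlib

open Finset
open scoped Classical

noncomputable section

/-- A skew Young diagram `λ/ν` (in English notation) with height `a` and width `b`.
Rows are indexed `1,…,a` from top to bottom and columns `1,…,b` from left to right;
row `i` consists of the boxes in columns `ν i + 1, …, λ i` (each row is nonempty).
Box `[i,j]` has its southeast corner at the lattice point `(i,j)`, the point `(0,0)`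
being the northwest corner of the bounding `a × b` rectangle. -/
structure SkewShape where
  a : ℕ
  b : ℕ
  ha : 1 ≤ a
  hb : 1 ≤ b
  lam : ℕ → ℕ
  nu : ℕ → ℕ
  lam_anti : ∀ i j : ℕ, 1 ≤ i → i ≤ j → j ≤ a → lam j ≤ lam i
  nu_anti : ∀ i j : ℕ, 1 ≤ i → i ≤ j → j ≤ a → nu j ≤ nu i
  nu_lt_lam : ∀ i : ℕ, 1 ≤ i → i ≤ a → nu i < lam i
  lam_le_b : ∀ i : ℕ, 1 ≤ i → i ≤ a → lam i ≤ b
  lam_one : lam 1 = b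
  nu_a : nu a = 0

namespace SkewShape

variable (σ : SkewShape)

/-- The boxes of `σ` : pairs `[i,j]` with `1 ≤ i ≤ a` and `ν i < j ≤ λ i`.
The poset `P_σ` is the set of boxes ordered componentwise:
`[i,j] ≤ [k,l]` iff `i ≤ k` and `j ≤ l` (the product order on `ℕ × ℕ`). -/
def cells : Finset (ℕ × ℕ) :=
  (Finset.Icc 1 σ.a ×ˢ Finset.Icc 1 σ.b).filter
    (fun c => σ.nu c.1 < c.2 ∧ c.2 ≤ σ.lam c.1)

/-- The poset `P_σ` of boxes of `σ` is connected: it is nonempty, and any two boxes are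
joined by a walk along comparable pairs of boxes. -/
def Connected : Prop :=
  σ.cells.Nonempty ∧ ∀ p ∈ σ.cells, ∀ q ∈ σ.cells,
    Relation.ReflTransGen
      (fun x y : ℕ × ℕ => x ∈ σ.cells ∧ y ∈ σ.cells ∧ (x ≤ y ∨ y ≤ x)) p q

/-- `I` is an order ideal of `P_σ`, i.e. a subshape of `σ`. -/
def IsIdeal (I : Finset (ℕ × ℕ)) : Prop :=
  I ⊆ σ.cells ∧ ∀ p ∈ I, ∀ q ∈ σ.cells, q ≤ p → q ∈ I

/-- The set `J(σ)` of all order ideals of `P_σ` (equivalently, subshapes of `σ`). -/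
def idealsFinset : Finset (Finset (ℕ × ℕ)) :=
  σ.cells.powerset.filter fun I => σ.IsIdeal I

/-- Box `p` can be toggled in to the order ideal `I`. -/
def CanToggleIn (I : Finset (ℕ × ℕ)) (p : ℕ × ℕ) : Prop :=
  p ∈ σ.cells ∧ p ∉ I ∧ σ.IsIdeal (insert p I)

/-- Box `p` can be toggled out of the order ideal `I`. -/
def CanToggleOut (I : Finset (ℕ × ℕ)) (p : ℕ × ℕ) : Prop :=
  p ∈ I ∧ σ.IsIdeal (I.erase p)

/-- The jaggedness of `I`: the number of boxes that can be toggled in,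
plus the number of boxes that can be toggled out. -/
def jag (I : Finset (ℕ × ℕ)) : ℕ :=
  (σ.cells.filter fun p => σ.CanToggleIn I p).card +
  (σ.cells.filter fun p => σ.CanToggleOut I p).card

/-- The probability, under `μ`, that a random order ideal of `P_σ` satisfies `E`. -/
def pr (μ : Finset (ℕ × ℕ) → ℝ) (E : Finset (ℕ × ℕ) → Prop) : ℝ :=
  ∑ I ∈ σ.idealsFinset.filter E, μ I

/-- `μ` is a probability distribution on `J(σ)`. -/
def IsProbDist (μ : Finset (ℕ × ℕ) → ℝ) : Prop :=
  (∀ I, 0 ≤ μ I) ∧ (∑ I ∈ σ.idealsFinset, μ I = 1)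

/-- `μ` is toggle-symmetric: for every box `p` of `σ`, the probability that `p` can be
toggled in equals the probability that `p` can be toggled out. -/
def ToggleSymmetric (μ : Finset (ℕ × ℕ) → ℝ) : Prop :=
  ∀ p ∈ σ.cells,
    σ.pr μ (fun I => σ.CanToggleIn I p) = σ.pr μ (fun I => σ.CanToggleOut I p)

/-- The expectation of the statistic `f` with respect to `μ`. -/
def expect (μ : Finset (ℕ × ℕ) → ℝ) (f : Finset (ℕ × ℕ) → ℝ) : ℝ :=
  ∑ I ∈ σ.idealsFinset, μ I * f I

/-- `c` is a northwest outward corner of `σ`, occurring at the lattice point `c = (i,j)`: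
the northwest boundary of `σ` turns at `(i,j)` with its two steps
(the top edge of box `[i+1,j]` and the left edge of box `[i,j+1]`)
not bordering a common box of `σ`. -/
def IsNWCorner (c : ℕ × ℕ) : Prop :=
  (c.1 + 1, c.2) ∈ σ.cells ∧ (c.1, c.2 + 1) ∈ σ.cells ∧ (c.1, c.2) ∉ σ.cells

/-- `c` is a southeast outward corner of `σ`, occurring at the lattice point `c = (i,j)`:
the southeast boundary of `σ` turns at `(i,j)` with its two steps
(the right edge of box `[i+1,j]` and the bottom edge of box `[i,j+1]`)
not bordering a common box of `σ`. -/
def IsSECorner (c : ℕ × ℕ) : Prop :=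
  (c.1 + 1, c.2) ∈ σ.cells ∧ (c.1, c.2 + 1) ∈ σ.cells ∧ (c.1 + 1, c.2 + 1) ∉ σ.cells

/-- The set of northwest outward corners of `σ`. -/
def nwCorners : Finset (ℕ × ℕ) :=
  (Finset.range (σ.a + 1) ×ˢ Finset.range (σ.b + 1)).filter fun c => σ.IsNWCorner c

/-- The set of southeast outward corners of `σ`.
(Together, `nwCorners` and `seCorners` form the set `C(σ)` of outward corners.) -/
def seCorners : Finset (ℕ × ℕ) :=
  (Finset.range (σ.a + 1) ×ˢ Finset.range (σ.b + 1)).filter fun c => σ.IsSECorner c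

/-- The displacement `δ(c) = 1 − i/a − j/b` of a northwest corner occurring at `(i,j)`. -/
def nwDisp (c : ℕ × ℕ) : ℝ := 1 - (c.1 : ℝ) / (σ.a : ℝ) - (c.2 : ℝ) / (σ.b : ℝ)

/-- The displacement `δ(c) = −1 + i/a + j/b` of a southeast corner occurring at `(i,j)`. -/
def seDisp (c : ℕ × ℕ) : ℝ := -1 + (c.1 : ℝ) / (σ.a : ℝ) + (c.2 : ℝ) / (σ.b : ℝ)

/-- The lattice path of the subshape `I` includes both steps of the northwest corner at
`c = (i,j)`: neither box `[i+1,j]` nor box `[i,j+1]` belongs to `I`. -/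
def NWInPath (c : ℕ × ℕ) (I : Finset (ℕ × ℕ)) : Prop :=
  (c.1 + 1, c.2) ∉ I ∧ (c.1, c.2 + 1) ∉ I

/-- The lattice path of the subshape `I` includes both steps of the southeast corner at
`c = (i,j)`: both boxes `[i+1,j]` and `[i,j+1]` belong to `I`. -/
def SEInPath (c : ℕ × ℕ) (I : Finset (ℕ × ℕ)) : Prop :=
  (c.1 + 1, c.2) ∈ I ∧ (c.1, c.2 + 1) ∈ I

/-- The correction term `Σ_{c ∈ C(σ)} δ(c) · P_μ(c)`, where `P_μ(c)` is the
`μ`-probability that the lattice path of a random subshape includes both steps of `c`. -/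
def cornerCorrection (μ : Finset (ℕ × ℕ) → ℝ) : ℝ :=
  (∑ c ∈ σ.nwCorners, σ.nwDisp c * σ.pr μ (NWInPath c)) +
  (∑ c ∈ σ.seCorners, σ.seDisp c * σ.pr μ (SEInPath c))

end SkewShape

namespace SkewShape

/-- The cardinality of the antichain `A(I)` of maximal elements of `I`
(with respect to the componentwise order on boxes). -/
def antichainCard (I : Finset (ℕ × ℕ)) : ℕ :=
  (I.filter fun p => ∀ q ∈ I, p ≤ q → q = p).card

end SkewShape


/- ### Auxiliary machinery for the proof ### -/

namespace SkewShape

section Generic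
variable (a b : ℕ)

variable (a b : ℕ)

/-- potential -/
def psi0 (t : ℕ × ℕ) : ℝ := (t.1 : ℝ) / (a : ℝ) + (t.2 : ℝ) / (b : ℝ) - 1

/-- EN turn of the boundary path of `R` at point `t`. -/
def ENt0 (R : Finset (ℕ × ℕ)) (t : ℕ × ℕ) : Prop :=
  t ∈ R ∧ (t.1 + 1, t.2) ∉ R ∧ (t.1, t.2 + 1) ∉ R

/-- NE turn of the boundary path of `R` at point `t`. -/
def NEt0 (R : Finset (ℕ × ℕ)) (t : ℕ × ℕ) : Prop :=
  (t.1 + 1, t.2) ∈ R ∧ (t.1, t.2 + 1) ∈ R ∧ (t.1 + 1, t.2 + 1) ∉ R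

/-- weighted turn sum -/
def Tsum0 (R : Finset (ℕ × ℕ)) : ℝ :=
  ∑ t ∈ Finset.range (a + 1) ×ˢ Finset.range (b + 1),
    psi0 a b t * ((if ENt0 R t then (1 : ℝ) else 0) - (if NEt0 R t then (1 : ℝ) else 0))

lemma Tsum0_insert (ha : 1 ≤ a) (hb : 1 ≤ b) (R : Finset (ℕ × ℕ)) (i j : ℕ)
    (hia : i + 1 ≤ a) (hjb : j + 1 ≤ b)
    (hp : (i + 1, j + 1) ∉ R) (hup : (i, j + 1) ∈ R) (hleft : (i + 1, j) ∈ R)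
    (hdl : (i, j) ∈ R) (hr1 : (i + 2, j + 1) ∉ R) (hr2 : (i + 1, j + 2) ∉ R) :
    Tsum0 a b (insert (i + 1, j + 1) R) = Tsum0 a b R := by
  have ha' : (a : ℝ) ≠ 0 := Nat.cast_ne_zero.mpr (by omega)
  have hb' : (b : ℝ) ≠ 0 := Nat.cast_ne_zero.mpr (by omega)
  classical
  have key : Tsum0 a b (insert (i + 1, j + 1) R) - Tsum0 a b R = 0 := by
    rw [Tsum0, Tsum0, ← Finset.sum_sub_distrib]
    have hDsub : ({(i, j), (i, j + 1), (i + 1, j), (i + 1, j + 1)} : Finset (ℕ × ℕ))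
        ⊆ Finset.range (a + 1) ×ˢ Finset.range (b + 1) := by
      intro t ht
      simp only [Finset.mem_insert, Finset.mem_singleton] at ht
      rcases ht with h | h | h | h <;> subst h <;>
        simp only [Finset.mem_product, Finset.mem_range] <;> omega
    rw [← Finset.sum_subset hDsub]
    · rw [Finset.sum_insert (by simp), Finset.sum_insert (by simp),
        Finset.sum_insert (by simp), Finset.sum_singleton]
      by_cases hV : (i, j + 2) ∈ R <;> by_cases hL : (i + 2, j) ∈ R <;>
      · simp only [ENt0, NEt0, Finset.mem_insert, Prod.mk.injEq, hp, hup, hleft, hdl, hr1,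
          hr2, hV, hL, psi0, not_true, not_false_iff, and_true, and_false, true_and,
          false_and, or_false, false_or, if_true, if_false]
        norm_num
        push_cast
        field_simp
        ring
    · intro t htg htD
      rcases t with ⟨x, y⟩
      simp only [Finset.mem_insert, Finset.mem_singleton, Prod.mk.injEq, not_or] at htD
      have ht1 : ¬ ((x, y) = ((i + 1 : ℕ), (j + 1 : ℕ))) := by
        simp only [Prod.mk.injEq]; omega
      have ht2 : ¬ (((x + 1 : ℕ), y) = ((i + 1 : ℕ), (j + 1 : ℕ))) := by
        simp only [Prod.mk.injEq]; omega
      have ht3 : ¬ ((x, (y + 1 : ℕ)) = ((i + 1 : ℕ), (j + 1 : ℕ))) := by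
        simp only [Prod.mk.injEq]; omega
      have ht4 : ¬ (((x + 1 : ℕ), (y + 1 : ℕ)) = ((i + 1 : ℕ), (j + 1 : ℕ))) := by
        simp only [Prod.mk.injEq]; omega
      have hEN : ENt0 (insert (i + 1, j + 1) R) (x, y) ↔ ENt0 R (x, y) := by
        simp only [ENt0, Finset.mem_insert, ht1, ht2, ht3, false_or]
      have hNE : NEt0 (insert (i + 1, j + 1) R) (x, y) ↔ NEt0 R (x, y) := by
        simp only [NEt0, Finset.mem_insert, ht2, ht3, ht4, false_or]
      rw [hEN, hNE]
      ring
  linarith [key]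

lemma Tsum0_base (ha : 1 ≤ a) (hb : 1 ≤ b) (R : Finset (ℕ × ℕ))
    (hmem : ∀ t : ℕ × ℕ, t ∈ R ↔ (t.1 ≤ a ∧ t.2 = 0) ∨ (t.1 = 0 ∧ t.2 ≤ b)) :
    Tsum0 a b R = 1 := by
  have ha' : (a : ℝ) ≠ 0 := Nat.cast_ne_zero.mpr (by omega)
  have hb' : (b : ℝ) ≠ 0 := Nat.cast_ne_zero.mpr (by omega)
  have hsub : ({((0 : ℕ), (0 : ℕ)), ((a : ℕ), (0 : ℕ)), ((0 : ℕ), (b : ℕ))} : Finset (ℕ × ℕ))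
      ⊆ Finset.range (a + 1) ×ˢ Finset.range (b + 1) := by
    intro t ht
    simp only [Finset.mem_insert, Finset.mem_singleton] at ht
    rcases ht with h | h | h <;> subst h <;>
      simp only [Finset.mem_product, Finset.mem_range] <;> omega
  rw [Tsum0, ← Finset.sum_subset hsub]
  · have d1 : ((0:ℕ), (0:ℕ)) ≠ ((a:ℕ), (0:ℕ)) := by
      intro h; have := congrArg Prod.fst h; simp only at this; omega
    have d2 : ((0:ℕ), (0:ℕ)) ≠ ((0:ℕ), (b:ℕ)) := by
      intro h; have := congrArg Prod.snd h; simp only at this; omega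
    have d3 : ((a:ℕ), (0:ℕ)) ≠ ((0:ℕ), (b:ℕ)) := by
      intro h; have := congrArg Prod.fst h; simp only at this; omega
    have m1 : ((0:ℕ), (0:ℕ)) ∉ ({((a:ℕ), (0:ℕ)), ((0:ℕ), (b:ℕ))} : Finset (ℕ × ℕ)) := by
      simp only [Finset.mem_insert, Finset.mem_singleton]
      push_neg
      exact ⟨d1, d2⟩
    have m2 : ((a:ℕ), (0:ℕ)) ∉ ({((0:ℕ), (b:ℕ))} : Finset (ℕ × ℕ)) := by
      simpa using d3
    rw [Finset.sum_insert m1, Finset.sum_insert m2, Finset.sum_singleton]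
    have hEN1 : ¬ ENt0 R (0, 0) := by
      rintro ⟨-, h, -⟩; exact h ((hmem _).mpr (by simp; omega))
    have hNE1 : NEt0 R (0, 0) := by
      refine ⟨(hmem _).mpr (by simp; omega), (hmem _).mpr (by simp; omega), ?_⟩
      rw [hmem]; simp
    have hEN2 : ENt0 R (a, 0) := by
      refine ⟨(hmem _).mpr (by simp), ?_, ?_⟩ <;>
        · intro h; rw [hmem] at h; simp at h <;> omega
    have hNE2 : ¬ NEt0 R (a, 0) := by
      rintro ⟨h, -, -⟩; rw [hmem] at h; simp at h <;> omega
    have hEN3 : ENt0 R (0, b) := by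
      refine ⟨(hmem _).mpr (by simp <;> omega), ?_, ?_⟩ <;>
        · intro h; rw [hmem] at h; simp at h <;> omega
    have hNE3 : ¬ NEt0 R (0, b) := by
      rintro ⟨h, -, -⟩; rw [hmem] at h; simp at h <;> omega
    rw [if_neg hEN1, if_pos hNE1, if_pos hEN2, if_neg hNE2, if_pos hEN3, if_neg hNE3]
    simp only [psi0]
    push_cast
    field_simp
    ring
  · intro t htg htD
    rcases t with ⟨x, y⟩
    simp only [Finset.mem_insert, Finset.mem_singleton, Prod.mk.injEq, not_or] at htD
    simp only [Finset.mem_product, Finset.mem_range] at htg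
    have hEN : ¬ ENt0 R (x, y) := by
      rintro ⟨h1, h2, h3⟩
      rw [hmem] at h1 h2 h3; push_neg at h2 h3
      simp only at h1 h2 h3
      omega
    have hNE : ¬ NEt0 R (x, y) := by
      rintro ⟨h1, h2, h3⟩
      rw [hmem] at h1 h2; simp only at h1 h2
      omega
    rw [if_neg hEN, if_neg hNE]
    ring

lemma Tsum0_eq_one (ha : 1 ≤ a) (hb : 1 ≤ b) :
    ∀ R : Finset (ℕ × ℕ), (∀ t ∈ R, t.1 ≤ a ∧ t.2 ≤ b) →
      (∀ t ∈ R, ∀ s : ℕ × ℕ, s.1 ≤ t.1 → s.2 ≤ t.2 → s ∈ R) →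
      (a, 0) ∈ R → (0, b) ∈ R → Tsum0 a b R = 1 := by
  intro R
  induction R using Finset.strongInduction with
  | _ R ih =>
    intro hsub hdc h1 h2
    by_cases hS : (R.filter fun p => 1 ≤ p.1 ∧ 1 ≤ p.2).Nonempty
    · obtain ⟨p, hpS, hpmax⟩ := Finset.exists_max_image _ (fun p => p.1 + p.2) hS
      simp only [Finset.mem_filter] at hpS
      obtain ⟨hpR, hp1, hp2⟩ := hpS
      obtain ⟨i, hi⟩ : ∃ i, p.1 = i + 1 := ⟨p.1 - 1, by omega⟩
      obtain ⟨j, hj⟩ : ∃ j, p.2 = j + 1 := ⟨p.2 - 1, by omega⟩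
      have hpij : p = (i + 1, j + 1) := by rw [← hi, ← hj]
      subst hpij
      set R' := R.erase (i + 1, j + 1) with hR'
      have hmaxmem : ∀ s : ℕ × ℕ, s ∈ R → i + 1 ≤ s.1 → j + 1 ≤ s.2 →
          s = (i + 1, j + 1) := by
        intro s hs hs1 hs2
        have := hpmax s (Finset.mem_filter.mpr ⟨hs, by omega, by omega⟩)
        have e1 : s.1 = i + 1 := by omega
        have e2 : s.2 = j + 1 := by omega
        rw [← e1, ← e2]
      have hdc' : ∀ t ∈ R', ∀ s : ℕ × ℕ, s.1 ≤ t.1 → s.2 ≤ t.2 → s ∈ R' := by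
        intro t ht s hs1 hs2
        have htR := Finset.mem_of_mem_erase ht
        have htne := Finset.ne_of_mem_erase ht
        have hsR := hdc t htR s hs1 hs2
        refine Finset.mem_erase.mpr ⟨?_, hsR⟩
        intro hse
        apply htne
        exact hmaxmem t htR (by rw [hse] at hs1; exact hs1) (by rw [hse] at hs2; exact hs2)
      have h1' : (a, 0) ∈ R' := Finset.mem_erase.mpr ⟨by simp, h1⟩
      have h2' : (0, b) ∈ R' := Finset.mem_erase.mpr ⟨by simp, h2⟩
      have hsub' : ∀ t ∈ R', t.1 ≤ a ∧ t.2 ≤ b := fun t ht =>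
        hsub t (Finset.mem_of_mem_erase ht)
      have hT' : Tsum0 a b R' = 1 :=
        ih R' (Finset.erase_ssubset hpR) hsub' hdc' h1' h2'
      have hins : insert (i + 1, j + 1) R' = R := Finset.insert_erase hpR
      have hbnd := hsub _ hpR
      have hup : (i, j + 1) ∈ R' := by
        refine Finset.mem_erase.mpr ⟨by simp, hdc _ hpR _ (by simp) (by simp)⟩
      have hleft : (i + 1, j) ∈ R' := by
        refine Finset.mem_erase.mpr ⟨by simp, hdc _ hpR _ (by simp) (by simp)⟩
      have hdl : (i, j) ∈ R' := by
        refine Finset.mem_erase.mpr ⟨by simp, hdc _ hpR _ (by simp) (by simp)⟩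
      have hp' : (i + 1, j + 1) ∉ R' := Finset.notMem_erase _ _
      have hr1 : (i + 2, j + 1) ∉ R' := by
        intro h
        have hR := Finset.mem_of_mem_erase h
        have := hmaxmem _ hR (by simp) (by simp)
        simp at this
      have hr2 : (i + 1, j + 2) ∉ R' := by
        intro h
        have hR := Finset.mem_of_mem_erase h
        have := hmaxmem _ hR (by simp) (by simp)
        simp at this
      rw [← hins, Tsum0_insert a b ha hb R' i j (by simp at hbnd; omega)
        (by simp at hbnd; omega) hp' hup hleft hdl hr1 hr2]
      exact hT'
    · apply Tsum0_base a b ha hb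
      intro t
      constructor
      · intro ht
        have hb' := hsub t ht
        have : ¬ (1 ≤ t.1 ∧ 1 ≤ t.2) := by
          intro hc
          exact hS ⟨t, Finset.mem_filter.mpr ⟨ht, hc⟩⟩
        omega
      · rintro (⟨hx, hy⟩ | ⟨hx, hy⟩)
        · exact hdc _ h1 t (by omega) (by omega)
        · exact hdc _ h2 t (by omega) (by omega)
end Generic

variable (σ : SkewShape)


lemma mem_cells {p : ℕ × ℕ} : p ∈ σ.cells ↔
    1 ≤ p.1 ∧ p.1 ≤ σ.a ∧ 1 ≤ p.2 ∧ p.2 ≤ σ.b ∧ σ.nu p.1 < p.2 ∧ p.2 ≤ σ.lam p.1 := by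
  simp only [cells, Finset.mem_filter, Finset.mem_product, Finset.mem_Icc]
  tauto

/-- The extended down-set associated to an ideal. -/
def Rset (I : Finset (ℕ × ℕ)) : Finset (ℕ × ℕ) :=
  (Finset.range (σ.a + 1) ×ˢ Finset.range (σ.b + 1)).filter
    (fun t => t.1 = 0 ∨ t.2 = 0 ∨ t.2 ≤ σ.nu t.1 ∨ t ∈ I)

lemma mem_Rset {I : Finset (ℕ × ℕ)} {t : ℕ × ℕ} : t ∈ σ.Rset I ↔
    t.1 ≤ σ.a ∧ t.2 ≤ σ.b ∧ (t.1 = 0 ∨ t.2 = 0 ∨ t.2 ≤ σ.nu t.1 ∨ t ∈ I) := by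
  simp only [Rset, Finset.mem_filter, Finset.mem_product, Finset.mem_range,
    Nat.lt_succ_iff, and_assoc]

lemma mem_Rset_cells {I : Finset (ℕ × ℕ)} (hI : σ.IsIdeal I) {p : ℕ × ℕ}
    (hp : p ∈ σ.cells) : p ∈ σ.Rset I ↔ p ∈ I := by
  rw [σ.mem_cells] at hp
  rw [σ.mem_Rset]
  constructor
  · rintro ⟨-, -, h | h | h | h⟩ <;> first | omega | exact h
  · intro h
    exact ⟨by omega, by omega, Or.inr (Or.inr (Or.inr h))⟩

lemma Rset_dc {I : Finset (ℕ × ℕ)} (hI : σ.IsIdeal I) :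
    ∀ t ∈ σ.Rset I, ∀ s : ℕ × ℕ, s.1 ≤ t.1 → s.2 ≤ t.2 → s ∈ σ.Rset I := by
  intro t ht s h1 h2
  rw [σ.mem_Rset] at ht ⊢
  obtain ⟨hta, htb, hc⟩ := ht
  refine ⟨by omega, by omega, ?_⟩
  rcases hc with h | h | h | h
  · left; omega
  · right; left; omega
  · by_cases hs1 : s.1 = 0
    · left; exact hs1
    · right; right; left
      calc s.2 ≤ t.2 := h2
        _ ≤ σ.nu t.1 := h
        _ ≤ σ.nu s.1 := σ.nu_anti s.1 t.1 (by omega) h1 hta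
  · -- t ∈ I
    have htc := σ.mem_cells.mp (hI.1 h)
    by_cases hs1 : s.1 = 0
    · left; exact hs1
    by_cases hs2 : s.2 = 0
    · right; left; exact hs2
    by_cases hnu : s.2 ≤ σ.nu s.1
    · right; right; left; exact hnu
    · right; right; right
      apply hI.2 t h s
      · rw [σ.mem_cells]
        refine ⟨by omega, by omega, by omega, by omega, by omega, ?_⟩
        calc s.2 ≤ t.2 := h2
          _ ≤ σ.lam t.1 := htc.2.2.2.2.2
          _ ≤ σ.lam s.1 := σ.lam_anti s.1 t.1 (by omega) h1 hta
      · exact Prod.le_def.mpr ⟨h1, h2⟩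

lemma cover_mem {I : Finset (ℕ × ℕ)} (hI : σ.IsIdeal I) {p x : ℕ × ℕ}
    (hp : p ∈ I) (hx : x ∈ I) (hle : p ≤ x) (hne : p ≠ x) :
    (p.1 + 1, p.2) ∈ I ∨ (p.1, p.2 + 1) ∈ I := by
  have hpc := σ.mem_cells.mp (hI.1 hp)
  have hxc := σ.mem_cells.mp (hI.1 hx)
  obtain ⟨h1, h2⟩ := Prod.le_def.mp hle
  by_cases hfst : p.1 < x.1
  · left
    apply hI.2 x hx
    · rw [σ.mem_cells]
      dsimp only
      refine ⟨by omega, by omega, by omega, by omega, ?_, ?_⟩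
      · calc σ.nu (p.1 + 1) ≤ σ.nu p.1 := σ.nu_anti p.1 (p.1 + 1) (by omega) (by omega) (by omega)
          _ < p.2 := hpc.2.2.2.2.1
      · calc p.2 ≤ x.2 := h2
          _ ≤ σ.lam x.1 := hxc.2.2.2.2.2
          _ ≤ σ.lam (p.1 + 1) := σ.lam_anti (p.1 + 1) x.1 (by omega) (by omega) (by omega)
    · exact Prod.le_def.mpr ⟨by dsimp only; omega, by dsimp only; exact h2⟩
  · have hfe : p.1 = x.1 := by omega
    have hsnd : p.2 < x.2 := by
      rcases Nat.lt_or_ge p.2 x.2 with h | h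
      · exact h
      · exfalso; apply hne; ext <;> omega
    right
    apply hI.2 x hx
    · rw [σ.mem_cells]
      dsimp only
      refine ⟨by omega, by omega, by omega, by omega, by omega, ?_⟩
      calc p.2 + 1 ≤ x.2 := by omega
        _ ≤ σ.lam x.1 := hxc.2.2.2.2.2
        _ = σ.lam p.1 := by rw [hfe]
    · exact Prod.le_def.mpr ⟨by dsimp only; omega, by dsimp only; omega⟩

lemma maximal_iff {I : Finset (ℕ × ℕ)} (hI : σ.IsIdeal I) {p : ℕ × ℕ} (hp : p ∈ I) :
    (∀ q ∈ I, p ≤ q → q = p) ↔ ((p.1 + 1, p.2) ∉ I ∧ (p.1, p.2 + 1) ∉ I) := by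
  constructor
  · intro h
    constructor
    · intro hmem
      have h' := h _ hmem (Prod.le_def.mpr ⟨by dsimp only; omega, by dsimp only; exact le_refl _⟩)
      have h'' := congrArg Prod.fst h'
      dsimp only at h''
      omega
    · intro hmem
      have h' := h _ hmem (Prod.le_def.mpr ⟨by dsimp only; exact le_refl _, by dsimp only; omega⟩)
      have h'' := congrArg Prod.snd h'
      dsimp only at h''
      omega
  · rintro ⟨h1, h2⟩ q hq hle
    by_contra hne
    rcases σ.cover_mem hI hp hq hle (fun h => hne h.symm) with h | h
    · exact h1 h
    · exact h2 h

lemma canToggleOut_iff {I : Finset (ℕ × ℕ)} (hI : σ.IsIdeal I) {p : ℕ × ℕ} :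
    σ.CanToggleOut I p ↔ p ∈ I ∧ (p.1 + 1, p.2) ∉ I ∧ (p.1, p.2 + 1) ∉ I := by
  constructor
  · rintro ⟨hp, hsub, hclo⟩
    refine ⟨hp, ?_, ?_⟩
    · intro hmem
      have h1 : (p.1 + 1, p.2) ∈ I.erase p := by
        refine Finset.mem_erase.mpr ⟨?_, hmem⟩
        intro h; have := congrArg Prod.fst h; simp at this
      have := hclo _ h1 p (hI.1 hp)
        (Prod.le_def.mpr ⟨by dsimp only; omega, by dsimp only; exact le_refl _⟩)
      exact Finset.notMem_erase p I this
    · intro hmem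
      have h1 : (p.1, p.2 + 1) ∈ I.erase p := by
        refine Finset.mem_erase.mpr ⟨?_, hmem⟩
        intro h; have := congrArg Prod.snd h; simp at this
      have := hclo _ h1 p (hI.1 hp)
        (Prod.le_def.mpr ⟨by dsimp only; exact le_refl _, by dsimp only; omega⟩)
      exact Finset.notMem_erase p I this
  · rintro ⟨hp, h1, h2⟩
    refine ⟨hp, Finset.Subset.trans (Finset.erase_subset _ _) hI.1, ?_⟩
    intro x hx q hqc hle
    have hxI := Finset.mem_of_mem_erase hx
    have hxne := Finset.ne_of_mem_erase hx
    have hqI : q ∈ I := hI.2 x hxI q hqc hle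
    refine Finset.mem_erase.mpr ⟨?_, hqI⟩
    intro hqp
    subst hqp
    rcases σ.cover_mem hI hqI hxI hle (Ne.symm hxne) with h | h
    · exact h1 h
    · exact h2 h

/-- consequence of connectivity -/
lemma conn_nu_lt_lam (hconn : σ.Connected) :
    ∀ i : ℕ, 1 ≤ i → i + 1 ≤ σ.a → σ.nu i < σ.lam (i + 1) := by
  intro i hi1 hia
  by_contra hcon
  push_neg at hcon
  have hp : ((i, σ.nu i + 1) : ℕ × ℕ) ∈ σ.cells := by
    rw [σ.mem_cells]
    dsimp only
    have h1 := σ.nu_lt_lam i hi1 (by omega)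
    have h2 := σ.lam_le_b i hi1 (by omega)
    refine ⟨by omega, by omega, by omega, by omega, by omega, by omega⟩
  have hq : ((i + 1, σ.nu (i + 1) + 1) : ℕ × ℕ) ∈ σ.cells := by
    rw [σ.mem_cells]
    dsimp only
    have h1 := σ.nu_lt_lam (i + 1) (by omega) hia
    have h2 := σ.lam_le_b (i + 1) (by omega) hia
    refine ⟨by omega, by omega, by omega, by omega, by omega, by omega⟩
  have hwalk := hconn.2 _ hp _ hq
  -- invariant: first coordinate stays ≤ i
  have hinv : ∀ y : ℕ × ℕ,
      Relation.ReflTransGen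
        (fun x y : ℕ × ℕ => x ∈ σ.cells ∧ y ∈ σ.cells ∧ (x ≤ y ∨ y ≤ x))
        (i, σ.nu i + 1) y → y.1 ≤ i := by
    intro y hy
    induction hy with
    | refl => exact le_refl i
    | tail hstep hrel ih =>
      rename_i c d
      obtain ⟨hcc, hdc, hcomp⟩ := hrel
      have hcm := σ.mem_cells.mp hcc
      have hdm := σ.mem_cells.mp hdc
      rcases hcomp with hle | hle
      · obtain ⟨h1, h2⟩ := Prod.le_def.mp hle
        by_contra hd1
        push_neg at hd1
        have hl1 : σ.lam d.1 ≤ σ.lam (i + 1) :=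
          σ.lam_anti (i + 1) d.1 (by omega) (by omega) (by omega)
        have hl2 : σ.nu i ≤ σ.nu c.1 :=
          σ.nu_anti c.1 i (by omega) (by omega) (by omega)
        have : c.2 ≤ σ.lam d.1 := le_trans h2 hdm.2.2.2.2.2
        omega
      · obtain ⟨h1, h2⟩ := Prod.le_def.mp hle
        omega
  have := hinv _ hwalk
  dsimp only at this
  omega

section Classification
variable {I : Finset (ℕ × ℕ)}

lemma L_out (hI : σ.IsIdeal I) {p : ℕ × ℕ} (hp : p ∈ σ.cells) :
    ENt0 (σ.Rset I) p ↔ σ.CanToggleOut I p := by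
  rw [σ.canToggleOut_iff hI, ENt0]
  rw [σ.mem_Rset_cells hI hp]
  have hpc := σ.mem_cells.mp hp
  constructor
  · rintro ⟨h1, h2, h3⟩
    refine ⟨h1, ?_, ?_⟩
    · intro hmem
      apply h2
      rw [σ.mem_Rset_cells hI (hI.1 hmem)]
      exact hmem
    · intro hmem
      apply h3
      rw [σ.mem_Rset_cells hI (hI.1 hmem)]
      exact hmem
  · rintro ⟨h1, h2, h3⟩
    refine ⟨h1, ?_, ?_⟩
    · intro hmem
      rw [σ.mem_Rset] at hmem
      dsimp only at hmem
      rcases hmem with ⟨hb1, hb2, h | h | h | h⟩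
      · omega
      · omega
      · have := σ.nu_anti p.1 (p.1 + 1) (by omega) (by omega) (by omega)
        omega
      · exact h2 h
    · intro hmem
      rw [σ.mem_Rset] at hmem
      dsimp only at hmem
      rcases hmem with ⟨-, -, h | h | h | h⟩
      · omega
      · omega
      · omega
      · exact h3 h

lemma L_in (hI : σ.IsIdeal I) {x y : ℕ} (hq : ((x + 1, y + 1) : ℕ × ℕ) ∈ σ.cells) :
    NEt0 (σ.Rset I) (x, y) ↔ σ.CanToggleIn I (x + 1, y + 1) := by
  have hqc := σ.mem_cells.mp hq
  dsimp only at hqc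
  rw [NEt0, CanToggleIn]
  dsimp only
  rw [σ.mem_Rset_cells hI hq]
  constructor
  · rintro ⟨h1, h2, h3⟩
    refine ⟨hq, h3, ?_, ?_⟩
    · intro z hz
      rcases Finset.mem_insert.mp hz with hz | hz
      · subst hz; exact hq
      · exact hI.1 hz
    · intro z hz r hrc hle
      rcases Finset.mem_insert.mp hz with hz | hz
      · subst hz
        by_cases hrq : r = ((x + 1 : ℕ), (y + 1 : ℕ))
        · exact hrq ▸ Finset.mem_insert_self _ _
        · apply Finset.mem_insert_of_mem
          have hrcc := σ.mem_cells.mp hrc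
          obtain ⟨hle1, hle2⟩ := Prod.le_def.mp hle
          dsimp only at hle1 hle2
          by_cases hr2 : r.2 ≤ y
          · rw [σ.mem_Rset] at h1
            dsimp only at h1
            rcases h1 with ⟨-, -, h | h | h | h⟩
            · exfalso; omega
            · exfalso; omega
            · exfalso
              have := σ.nu_anti r.1 (x + 1) (by omega) (by omega) (by omega)
              omega
            · exact hI.2 _ h r hrc
                (Prod.le_def.mpr ⟨by dsimp only; omega, by dsimp only; omega⟩)
          · have hr1 : r.1 ≤ x := by
              rcases Nat.lt_or_ge r.1 (x + 1) with h | h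
              · omega
              · exfalso; apply hrq; rw [Prod.ext_iff]; dsimp only; omega
            rw [σ.mem_Rset] at h2
            dsimp only at h2
            rcases h2 with ⟨-, -, h | h | h | h⟩
            · exfalso; omega
            · exfalso; omega
            · exfalso
              have := σ.nu_anti r.1 x (by omega) (by omega) (by omega)
              omega
            · exact hI.2 _ h r hrc
                (Prod.le_def.mpr ⟨by dsimp only; omega, by dsimp only; omega⟩)
      · exact Finset.mem_insert_of_mem (hI.2 z hz r hrc hle)
  · rintro ⟨-, hnotin, hsub, hclo⟩
    refine ⟨?_, ?_, ?_⟩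
    · rw [σ.mem_Rset]
      dsimp only
      refine ⟨by omega, by omega, ?_⟩
      by_cases hy0 : y = 0
      · right; left; exact hy0
      by_cases hnu : y ≤ σ.nu (x + 1)
      · right; right; left; exact hnu
      · right; right; right
        have hm : ((x + 1, y) : ℕ × ℕ) ∈ σ.cells := by
          rw [σ.mem_cells]
          dsimp only
          refine ⟨by omega, by omega, by omega, by omega, by omega, by omega⟩
        have hmem := hclo _ (Finset.mem_insert_self _ _) _ hm
          (Prod.le_def.mpr ⟨by dsimp only; exact le_refl _, by dsimp only; omega⟩)
        rcases Finset.mem_insert.mp hmem with h | h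
        · exfalso; have := congrArg Prod.snd h; dsimp only at this; omega
        · exact h
    · rw [σ.mem_Rset]
      dsimp only
      refine ⟨by omega, by omega, ?_⟩
      by_cases hx0 : x = 0
      · left; exact hx0
      by_cases hnu : y + 1 ≤ σ.nu x
      · right; right; left; exact hnu
      · right; right; right
        have hm : ((x, y + 1) : ℕ × ℕ) ∈ σ.cells := by
          rw [σ.mem_cells]
          dsimp only
          have := σ.lam_anti x (x + 1) (by omega) (by omega) (by omega)
          refine ⟨by omega, by omega, by omega, by omega, by omega, by omega⟩
        have hmem := hclo _ (Finset.mem_insert_self _ _) _ hm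
          (Prod.le_def.mpr ⟨by dsimp only; omega, by dsimp only; exact le_refl _⟩)
        rcases Finset.mem_insert.mp hmem with h | h
        · exfalso; have := congrArg Prod.fst h; dsimp only at this; omega
        · exact h
    · exact hnotin

lemma L_nw (hI : σ.IsIdeal I) {t : ℕ × ℕ} (hnw : σ.IsNWCorner t) :
    ENt0 (σ.Rset I) t ↔ NWInPath t I := by
  obtain ⟨h1, h2, h3⟩ := hnw
  have m1 := σ.mem_cells.mp h1
  have m2 := σ.mem_cells.mp h2
  dsimp only at m1 m2
  have htR : t ∈ σ.Rset I := by
    rw [σ.mem_Rset]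
    refine ⟨by omega, by omega, ?_⟩
    right; right; left
    have hnotc := h3
    rw [σ.mem_cells] at hnotc
    dsimp only at hnotc
    by_contra hcon
    exact hnotc ⟨by omega, by omega, by omega, by omega, by omega, by omega⟩
  unfold ENt0 NWInPath
  constructor
  · rintro ⟨-, hA, hB⟩
    exact ⟨fun h => hA ((σ.mem_Rset_cells hI h1).mpr h),
      fun h => hB ((σ.mem_Rset_cells hI h2).mpr h)⟩
  · rintro ⟨hA, hB⟩
    exact ⟨htR, fun h => hA ((σ.mem_Rset_cells hI h1).mp h),
      fun h => hB ((σ.mem_Rset_cells hI h2).mp h)⟩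

lemma L_se (hI : σ.IsIdeal I) {t : ℕ × ℕ} (hse : σ.IsSECorner t) :
    NEt0 (σ.Rset I) t ↔ SEInPath t I := by
  obtain ⟨h1, h2, h3⟩ := hse
  have m1 := σ.mem_cells.mp h1
  dsimp only at m1
  unfold NEt0 SEInPath
  constructor
  · rintro ⟨hA, hB, -⟩
    exact ⟨(σ.mem_Rset_cells hI h1).mp hA, (σ.mem_Rset_cells hI h2).mp hB⟩
  · rintro ⟨hA, hB⟩
    refine ⟨(σ.mem_Rset_cells hI h1).mpr hA, (σ.mem_Rset_cells hI h2).mpr hB, ?_⟩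
    intro hmem
    rw [σ.mem_Rset] at hmem
    dsimp only at hmem
    rcases hmem with ⟨hb1, hb2, h | h | h | h⟩
    · omega
    · omega
    · omega
    · exact h3 (hI.1 h)

lemma L_en_rest (hI : σ.IsIdeal I)
    (hcl : ∀ i : ℕ, 1 ≤ i → i + 1 ≤ σ.a → σ.nu i < σ.lam (i + 1))
    {t : ℕ × ℕ} (hcells : t ∉ σ.cells) (hnw : ¬ σ.IsNWCorner t)
    (hen : ENt0 (σ.Rset I) t) : t = ((σ.a : ℕ), (0 : ℕ)) ∨ t = ((0 : ℕ), (σ.b : ℕ)) := by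
  obtain ⟨htR, hA, hB⟩ := hen
  rw [σ.mem_Rset] at htR
  obtain ⟨ha', hb', hc⟩ := htR
  by_cases ht1 : t.1 = 0
  · right
    have hb2 : t.2 = σ.b := by
      by_contra hcon
      apply hB
      rw [σ.mem_Rset]
      exact ⟨by omega, by omega, Or.inl ht1⟩
    rw [Prod.ext_iff]
    exact ⟨ht1, hb2⟩
  by_cases ht2 : t.2 = 0
  · left
    have ha2 : t.1 = σ.a := by
      by_contra hcon
      apply hA
      rw [σ.mem_Rset]
      exact ⟨by omega, by omega, Or.inr (Or.inl ht2)⟩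
    rw [Prod.ext_iff]
    exact ⟨ha2, ht2⟩
  · exfalso
    have hnu : t.2 ≤ σ.nu t.1 := by
      rcases hc with h | h | h | h
      · omega
      · omega
      · exact h
      · exact absurd (hI.1 h) hcells
    have hll := σ.nu_lt_lam t.1 (by omega) (by omega)
    have hlb := σ.lam_le_b t.1 (by omega) (by omega)
    have t2e : t.2 = σ.nu t.1 := by
      by_contra hcon
      apply hB
      rw [σ.mem_Rset]
      dsimp only
      exact ⟨by omega, by omega, Or.inr (Or.inr (Or.inl (by omega)))⟩
    have t1a : t.1 < σ.a := by
      by_contra hcon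
      have : t.1 = σ.a := by omega
      rw [this, σ.nu_a] at hnu
      omega
    have nustrict : σ.nu (t.1 + 1) < t.2 := by
      have hle := σ.nu_anti t.1 (t.1 + 1) (by omega) (by omega) (by omega)
      by_contra hcon
      apply hA
      rw [σ.mem_Rset]
      dsimp only
      exact ⟨by omega, by omega, Or.inr (Or.inr (Or.inl (by omega)))⟩
    have hcl' := hcl t.1 (by omega) (by omega)
    apply hnw
    refine ⟨?_, ?_, hcells⟩
    · rw [σ.mem_cells]
      dsimp only
      exact ⟨by omega, by omega, by omega, by omega, nustrict, by omega⟩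
    · rw [σ.mem_cells]
      dsimp only
      exact ⟨by omega, by omega, by omega, by omega, by omega, by omega⟩

lemma L_ne_rest (hI : σ.IsIdeal I)
    (hcl : ∀ i : ℕ, 1 ≤ i → i + 1 ≤ σ.a → σ.nu i < σ.lam (i + 1))
    {t : ℕ × ℕ} (hq : ((t.1 + 1, t.2 + 1) : ℕ × ℕ) ∉ σ.cells)
    (hne : NEt0 (σ.Rset I) t) : σ.IsSECorner t ∧ SEInPath t I := by
  obtain ⟨h1, h2, h3⟩ := hne
  have hm1 := σ.mem_Rset.mp h1
  have hm2 := σ.mem_Rset.mp h2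
  dsimp only at hm1 hm2
  have hba : t.1 + 1 ≤ σ.a := hm1.1
  have hbb : t.2 + 1 ≤ σ.b := hm2.2.1
  have hnuq : σ.nu (t.1 + 1) < t.2 + 1 := by
    by_contra hcon
    apply h3
    rw [σ.mem_Rset]
    dsimp only
    exact ⟨by omega, by omega, Or.inr (Or.inr (Or.inl (by omega)))⟩
  have hlamq : σ.lam (t.1 + 1) ≤ t.2 := by
    have hnotc := hq
    rw [σ.mem_cells] at hnotc
    dsimp only at hnotc
    by_contra hcon
    exact hnotc ⟨by omega, by omega, by omega, by omega, by omega, by omega⟩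
  have hll := σ.nu_lt_lam (t.1 + 1) (by omega) (by omega)
  have hIl : ((t.1 + 1, t.2) : ℕ × ℕ) ∈ I := by
    rcases hm1.2.2 with h | h | h | h
    · exact absurd h (by omega)
    · exact absurd h (by omega)
    · exact absurd h (by omega)
    · exact h
  have ht1 : 1 ≤ t.1 := by
    by_contra hcon
    have ht0 : t.1 = 0 := by omega
    have h1' := hlamq
    rw [ht0] at h1'
    norm_num at h1'
    have hl1 := σ.lam_one
    omega
  have hIu : ((t.1, t.2 + 1) : ℕ × ℕ) ∈ I := by
    rcases hm2.2.2 with h | h | h | h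
    · exact absurd h (by omega)
    · exact absurd h (by omega)
    · have := hcl t.1 (by omega) (by omega)
      exact absurd h (by omega)
    · exact h
  exact ⟨⟨hI.1 hIl, hI.1 hIu, hq⟩, hIl, hIu⟩

end Classification

section Sums
variable {I : Finset (ℕ × ℕ)}

lemma cells_subset_grid :
    σ.cells ⊆ Finset.range (σ.a + 1) ×ˢ Finset.range (σ.b + 1) := by
  intro p hp
  have := σ.mem_cells.mp hp
  simp only [Finset.mem_product, Finset.mem_range]
  omega

lemma sum_EN (hI : σ.IsIdeal I)
    (hcl : ∀ i : ℕ, 1 ≤ i → i + 1 ≤ σ.a → σ.nu i < σ.lam (i + 1)) :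
    ∑ t ∈ Finset.range (σ.a + 1) ×ˢ Finset.range (σ.b + 1),
      psi0 σ.a σ.b t * (if ENt0 (σ.Rset I) t then (1 : ℝ) else 0)
    = (∑ p ∈ σ.cells, psi0 σ.a σ.b p * (if σ.CanToggleOut I p then (1 : ℝ) else 0))
      + ∑ c ∈ σ.nwCorners, psi0 σ.a σ.b c * (if NWInPath c I then (1 : ℝ) else 0) := by
  have hdisj : Disjoint σ.cells σ.nwCorners := by
    rw [Finset.disjoint_left]
    intro p hp hpnw
    have h := (Finset.mem_filter.mp hpnw).2.2.2
    rw [Prod.mk.eta] at h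
    exact h hp
  have hsub : σ.cells ∪ σ.nwCorners ⊆ Finset.range (σ.a + 1) ×ˢ Finset.range (σ.b + 1) := by
    apply Finset.union_subset σ.cells_subset_grid
    exact Finset.filter_subset _ _
  rw [← Finset.sum_subset hsub]
  · rw [Finset.sum_union hdisj]
    congr 1
    · apply Finset.sum_congr rfl
      intro p hp
      rw [if_congr (σ.L_out hI hp) rfl rfl]
    · apply Finset.sum_congr rfl
      intro c hc
      rw [if_congr (σ.L_nw hI (Finset.mem_filter.mp hc).2) rfl rfl]
  · intro t htg htu
    by_cases hen : ENt0 (σ.Rset I) t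
    · have hnc : t ∉ σ.cells := fun h => htu (Finset.mem_union_left _ h)
      have hnnw : ¬ σ.IsNWCorner t := by
        intro h
        exact htu (Finset.mem_union_right _ (Finset.mem_filter.mpr ⟨htg, h⟩))
      rcases σ.L_en_rest hI hcl hnc hnnw hen with h | h <;> rw [h]
      · have ha' : (σ.a : ℝ) ≠ 0 := Nat.cast_ne_zero.mpr (by have := σ.ha; omega)
        simp [psi0, div_self ha']
      · have hb' : (σ.b : ℝ) ≠ 0 := Nat.cast_ne_zero.mpr (by have := σ.hb; omega)
        simp [psi0, div_self hb']
    · rw [if_neg hen, mul_zero]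

lemma sum_NE (hI : σ.IsIdeal I)
    (hcl : ∀ i : ℕ, 1 ≤ i → i + 1 ≤ σ.a → σ.nu i < σ.lam (i + 1)) :
    ∑ t ∈ Finset.range (σ.a + 1) ×ˢ Finset.range (σ.b + 1),
      psi0 σ.a σ.b t * (if NEt0 (σ.Rset I) t then (1 : ℝ) else 0)
    = (∑ p ∈ σ.cells, (psi0 σ.a σ.b p - (1 / (σ.a : ℝ) + 1 / (σ.b : ℝ)))
        * (if σ.CanToggleIn I p then (1 : ℝ) else 0))
      + ∑ c ∈ σ.seCorners, psi0 σ.a σ.b c * (if SEInPath c I then (1 : ℝ) else 0) := by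
  classical
  set sh : Finset (ℕ × ℕ) := σ.cells.image (fun q => (q.1 - 1, q.2 - 1)) with hsh
  have hmem_sh : ∀ t : ℕ × ℕ, t ∈ sh → ((t.1 + 1, t.2 + 1) : ℕ × ℕ) ∈ σ.cells := by
    intro t ht
    obtain ⟨q, hq, hqe⟩ := Finset.mem_image.mp ht
    have hqc := σ.mem_cells.mp hq
    have h1 : q.1 - 1 = t.1 := congrArg Prod.fst hqe
    have h2 : q.2 - 1 = t.2 := congrArg Prod.snd hqe
    have : ((t.1 + 1, t.2 + 1) : ℕ × ℕ) = q := by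
      rw [Prod.ext_iff]
      constructor <;> dsimp only <;> omega
    rw [this]
    exact hq
  have hdisj : Disjoint sh σ.seCorners := by
    rw [Finset.disjoint_left]
    intro t ht htse
    exact (Finset.mem_filter.mp htse).2.2.2 (hmem_sh t ht)
  have hsub : sh ∪ σ.seCorners ⊆ Finset.range (σ.a + 1) ×ˢ Finset.range (σ.b + 1) := by
    apply Finset.union_subset
    · intro t ht
      obtain ⟨q, hq, hqe⟩ := Finset.mem_image.mp ht
      have hqc := σ.mem_cells.mp hq
      have h1 : q.1 - 1 = t.1 := congrArg Prod.fst hqe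
      have h2 : q.2 - 1 = t.2 := congrArg Prod.snd hqe
      simp only [Finset.mem_product, Finset.mem_range]
      omega
    · exact Finset.filter_subset _ _
  rw [← Finset.sum_subset hsub]
  · rw [Finset.sum_union hdisj]
    congr 1
    · rw [hsh, Finset.sum_image ?hinj]
      case hinj =>
        intro x hx y hy hxy
        have hxc := σ.mem_cells.mp hx
        have hyc := σ.mem_cells.mp hy
        have h1 : x.1 - 1 = y.1 - 1 := congrArg Prod.fst hxy
        have h2 : x.2 - 1 = y.2 - 1 := congrArg Prod.snd hxy
        rw [Prod.ext_iff]
        omega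
      apply Finset.sum_congr rfl
      intro q hq
      have hqc := σ.mem_cells.mp hq
      have hqe : ((q.1 - 1 + 1, q.2 - 1 + 1) : ℕ × ℕ) = q := by
        rw [Prod.ext_iff]
        constructor <;> dsimp only <;> omega
      have hiff := σ.L_in (x := q.1 - 1) (y := q.2 - 1) hI (by rw [hqe]; exact hq)
      rw [hqe] at hiff
      rw [if_congr hiff rfl rfl]
      congr 1
      have hc1 : ((q.1 - 1 : ℕ) : ℝ) = (q.1 : ℝ) - 1 := by
        rw [Nat.cast_sub (by omega)]
        norm_num
      have hc2 : ((q.2 - 1 : ℕ) : ℝ) = (q.2 : ℝ) - 1 := by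
        rw [Nat.cast_sub (by omega)]
        norm_num
      simp only [psi0, hc1, hc2]
      ring
    · apply Finset.sum_congr rfl
      intro c hc
      rw [if_congr (σ.L_se hI (Finset.mem_filter.mp hc).2) rfl rfl]
  · intro t htg htu
    by_cases hne : NEt0 (σ.Rset I) t
    · exfalso
      by_cases hq : ((t.1 + 1, t.2 + 1) : ℕ × ℕ) ∈ σ.cells
      · apply htu
        apply Finset.mem_union_left
        rw [hsh]
        apply Finset.mem_image.mpr
        refine ⟨(t.1 + 1, t.2 + 1), hq, ?_⟩
        rw [Prod.ext_iff]
        constructor <;> dsimp only <;> omega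
      · obtain ⟨hse, -⟩ := σ.L_ne_rest hI hcl hq hne
        exact htu (Finset.mem_union_right _ (Finset.mem_filter.mpr ⟨htg, hse⟩))
    · rw [if_neg hne, mul_zero]

/-- the per-ideal master identity -/
lemma key_ideal (hI : σ.IsIdeal I)
    (hcl : ∀ i : ℕ, 1 ≤ i → i + 1 ≤ σ.a → σ.nu i < σ.lam (i + 1)) :
    (∑ p ∈ σ.cells, psi0 σ.a σ.b p * (if σ.CanToggleOut I p then (1 : ℝ) else 0))
    + (∑ c ∈ σ.nwCorners, psi0 σ.a σ.b c * (if NWInPath c I then (1 : ℝ) else 0))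
    - (∑ p ∈ σ.cells, (psi0 σ.a σ.b p - (1 / (σ.a : ℝ) + 1 / (σ.b : ℝ)))
        * (if σ.CanToggleIn I p then (1 : ℝ) else 0))
    - (∑ c ∈ σ.seCorners, psi0 σ.a σ.b c * (if SEInPath c I then (1 : ℝ) else 0)) = 1 := by
  have hT : Tsum0 σ.a σ.b (σ.Rset I) = 1 := by
    apply Tsum0_eq_one σ.a σ.b σ.ha σ.hb
    · intro t ht
      have := σ.mem_Rset.mp ht
      exact ⟨this.1, this.2.1⟩
    · exact σ.Rset_dc hI
    · rw [σ.mem_Rset]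
      exact ⟨le_refl _, by omega, Or.inr (Or.inl rfl)⟩
    · rw [σ.mem_Rset]
      exact ⟨by omega, le_refl _, Or.inl rfl⟩
  rw [Tsum0] at hT
  have hsplit : ∑ t ∈ Finset.range (σ.a + 1) ×ˢ Finset.range (σ.b + 1),
      psi0 σ.a σ.b t * ((if ENt0 (σ.Rset I) t then (1 : ℝ) else 0)
        - (if NEt0 (σ.Rset I) t then (1 : ℝ) else 0))
      = (∑ t ∈ Finset.range (σ.a + 1) ×ˢ Finset.range (σ.b + 1),
          psi0 σ.a σ.b t * (if ENt0 (σ.Rset I) t then (1 : ℝ) else 0))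
        - ∑ t ∈ Finset.range (σ.a + 1) ×ˢ Finset.range (σ.b + 1),
          psi0 σ.a σ.b t * (if NEt0 (σ.Rset I) t then (1 : ℝ) else 0) := by
    rw [← Finset.sum_sub_distrib]
    apply Finset.sum_congr rfl
    intro t ht
    ring
  rw [hsplit, σ.sum_EN hI hcl, σ.sum_NE hI hcl] at hT
  linarith [hT]

end Sums

lemma pr_eq (μ : Finset (ℕ × ℕ) → ℝ) (E : Finset (ℕ × ℕ) → Prop) :
    σ.pr μ E = ∑ I ∈ σ.idealsFinset, (if E I then μ I else 0) := by
  rw [pr, Finset.sum_filter]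

lemma swap_gen (μ : Finset (ℕ × ℕ) → ℝ) (s : Finset (ℕ × ℕ)) (w : ℕ × ℕ → ℝ)
    (E : ℕ × ℕ → Finset (ℕ × ℕ) → Prop) :
    ∑ I ∈ σ.idealsFinset, μ I * ∑ p ∈ s, w p * (if E p I then (1 : ℝ) else 0)
    = ∑ p ∈ s, w p * ∑ I ∈ σ.idealsFinset, (if E p I then μ I else 0) := by
  classical
  have h1 : ∀ I ∈ σ.idealsFinset,
      μ I * ∑ p ∈ s, w p * (if E p I then (1 : ℝ) else 0)
      = ∑ p ∈ s, w p * (if E p I then μ I else 0) := by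
    intro I hI
    rw [Finset.mul_sum]
    apply Finset.sum_congr rfl
    intro p hp
    by_cases h : E p I <;> simp [h] <;> ring
  rw [Finset.sum_congr rfl h1, Finset.sum_comm]
  apply Finset.sum_congr rfl
  intro p hp
  rw [Finset.mul_sum]

lemma mem_idealsFinset {I : Finset (ℕ × ℕ)} : I ∈ σ.idealsFinset ↔ σ.IsIdeal I := by
  constructor
  · intro h
    exact (Finset.mem_filter.mp h).2
  · intro h
    exact Finset.mem_filter.mpr ⟨Finset.mem_powerset.mpr h.1, h⟩

lemma antichain_eq {I : Finset (ℕ × ℕ)} (hI : σ.IsIdeal I) :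
    ((antichainCard I : ℕ) : ℝ)
    = ∑ p ∈ σ.cells, (1 : ℝ) * (if σ.CanToggleOut I p then (1 : ℝ) else 0) := by
  classical
  have hset : (I.filter fun p => ∀ q ∈ I, p ≤ q → q = p)
      = σ.cells.filter (fun p => σ.CanToggleOut I p) := by
    apply Finset.ext
    intro p
    simp only [Finset.mem_filter]
    constructor
    · rintro ⟨hp, hmax⟩
      exact ⟨hI.1 hp, (σ.canToggleOut_iff hI).mpr ⟨hp, ((σ.maximal_iff hI hp).mp hmax)⟩⟩
    · rintro ⟨hpc, hout⟩
      obtain ⟨hp, hcov⟩ := (σ.canToggleOut_iff hI).mp hout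
      exact ⟨hp, (σ.maximal_iff hI hp).mpr hcov⟩
  rw [antichainCard, hset, Finset.card_filter]
  push_cast
  apply Finset.sum_congr rfl
  intro p hp
  by_cases h : σ.CanToggleOut I p <;> simp [h]


end SkewShape

/-- Corollary 3.12: for a connected skew shape `σ` with height `a` and
width `b` and any toggle-symmetric probability distribution `μ` on `J(σ)`, the expected
cardinality of the antichain of maximal elements of a `μ`-random order ideal is
`(ab/(a+b)) · (1 + Σ_{c ∈ C(σ)} δ(c) · P_μ(c))`. -/
theorem SkewShape.expected_antichain_card (σ : SkewShape) (hconn : σ.Connected)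
    (μ : Finset (ℕ × ℕ) → ℝ) (hμ : σ.IsProbDist μ) (hts : σ.ToggleSymmetric μ) :
    σ.expect μ (fun I => (SkewShape.antichainCard I : ℝ)) =
      (σ.a : ℝ) * (σ.b : ℝ) / ((σ.a : ℝ) + (σ.b : ℝ)) * (1 + σ.cornerCorrection μ) := by
  classical
  obtain ⟨hμ0, hμ1⟩ := hμ
  have hcl := σ.conn_nu_lt_lam hconn
  have ha' : (σ.a : ℝ) ≠ 0 := Nat.cast_ne_zero.mpr (by have := σ.ha; omega)
  have hb' : (σ.b : ℝ) ≠ 0 := Nat.cast_ne_zero.mpr (by have := σ.hb; omega)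
  have hapos : (0 : ℝ) < (σ.a : ℝ) := by
    have := σ.ha; exact_mod_cast Nat.pos_of_ne_zero (by omega)
  have hbpos : (0 : ℝ) < (σ.b : ℝ) := by
    have := σ.hb; exact_mod_cast Nat.pos_of_ne_zero (by omega)
  have hab' : (σ.a : ℝ) + (σ.b : ℝ) ≠ 0 := by positivity
  -- summed master identity
  have hsum1 : ∀ I ∈ σ.idealsFinset,
      μ I * ((∑ p ∈ σ.cells, psi0 σ.a σ.b p * (if σ.CanToggleOut I p then (1 : ℝ) else 0))
        + (∑ c ∈ σ.nwCorners, psi0 σ.a σ.b c * (if NWInPath c I then (1 : ℝ) else 0))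
        - (∑ p ∈ σ.cells, (psi0 σ.a σ.b p - (1 / (σ.a : ℝ) + 1 / (σ.b : ℝ)))
            * (if σ.CanToggleIn I p then (1 : ℝ) else 0))
        - (∑ c ∈ σ.seCorners, psi0 σ.a σ.b c * (if SEInPath c I then (1 : ℝ) else 0)))
      = μ I := by
    intro I hI
    rw [σ.key_ideal (σ.mem_idealsFinset.mp hI) hcl, mul_one]
  have hsum2 : ∑ I ∈ σ.idealsFinset,
      μ I * ((∑ p ∈ σ.cells, psi0 σ.a σ.b p * (if σ.CanToggleOut I p then (1 : ℝ) else 0))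
        + (∑ c ∈ σ.nwCorners, psi0 σ.a σ.b c * (if NWInPath c I then (1 : ℝ) else 0))
        - (∑ p ∈ σ.cells, (psi0 σ.a σ.b p - (1 / (σ.a : ℝ) + 1 / (σ.b : ℝ)))
            * (if σ.CanToggleIn I p then (1 : ℝ) else 0))
        - (∑ c ∈ σ.seCorners, psi0 σ.a σ.b c * (if SEInPath c I then (1 : ℝ) else 0)))
      = 1 := by
    rw [Finset.sum_congr rfl hsum1]
    exact hμ1
  -- expand into four sums
  have hexpand : ∑ I ∈ σ.idealsFinset,
      μ I * ((∑ p ∈ σ.cells, psi0 σ.a σ.b p * (if σ.CanToggleOut I p then (1 : ℝ) else 0))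
        + (∑ c ∈ σ.nwCorners, psi0 σ.a σ.b c * (if NWInPath c I then (1 : ℝ) else 0))
        - (∑ p ∈ σ.cells, (psi0 σ.a σ.b p - (1 / (σ.a : ℝ) + 1 / (σ.b : ℝ)))
            * (if σ.CanToggleIn I p then (1 : ℝ) else 0))
        - (∑ c ∈ σ.seCorners, psi0 σ.a σ.b c * (if SEInPath c I then (1 : ℝ) else 0)))
      = (∑ I ∈ σ.idealsFinset, μ I *
          ∑ p ∈ σ.cells, psi0 σ.a σ.b p * (if σ.CanToggleOut I p then (1 : ℝ) else 0))
        + (∑ I ∈ σ.idealsFinset, μ I *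
          ∑ c ∈ σ.nwCorners, psi0 σ.a σ.b c * (if NWInPath c I then (1 : ℝ) else 0))
        - (∑ I ∈ σ.idealsFinset, μ I *
          ∑ p ∈ σ.cells, (psi0 σ.a σ.b p - (1 / (σ.a : ℝ) + 1 / (σ.b : ℝ)))
            * (if σ.CanToggleIn I p then (1 : ℝ) else 0))
        - (∑ I ∈ σ.idealsFinset, μ I *
          ∑ c ∈ σ.seCorners, psi0 σ.a σ.b c * (if SEInPath c I then (1 : ℝ) else 0)) := by
    rw [← Finset.sum_add_distrib, ← Finset.sum_sub_distrib, ← Finset.sum_sub_distrib]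
    apply Finset.sum_congr rfl
    intro I hI
    ring
  rw [hexpand] at hsum2
  rw [σ.swap_gen μ σ.cells (fun p => psi0 σ.a σ.b p) (fun p I => σ.CanToggleOut I p),
      σ.swap_gen μ σ.nwCorners (fun c => psi0 σ.a σ.b c) (fun c I => NWInPath c I),
      σ.swap_gen μ σ.cells
        (fun p => psi0 σ.a σ.b p - (1 / (σ.a : ℝ) + 1 / (σ.b : ℝ)))
        (fun p I => σ.CanToggleIn I p),
      σ.swap_gen μ σ.seCorners (fun c => psi0 σ.a σ.b c) (fun c I => SEInPath c I)]
    at hsum2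
  -- toggle symmetry in summed form
  have hts' : ∀ p ∈ σ.cells,
      (∑ I ∈ σ.idealsFinset, (if σ.CanToggleIn I p then μ I else 0))
      = ∑ I ∈ σ.idealsFinset, (if σ.CanToggleOut I p then μ I else 0) := by
    intro p hp
    have := hts p hp
    rw [σ.pr_eq, σ.pr_eq] at this
    exact this
  have hBrw : ∑ p ∈ σ.cells, (psi0 σ.a σ.b p - (1 / (σ.a : ℝ) + 1 / (σ.b : ℝ)))
        * ∑ I ∈ σ.idealsFinset, (if σ.CanToggleIn I p then μ I else 0)
      = ∑ p ∈ σ.cells, (psi0 σ.a σ.b p - (1 / (σ.a : ℝ) + 1 / (σ.b : ℝ)))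
        * ∑ I ∈ σ.idealsFinset, (if σ.CanToggleOut I p then μ I else 0) := by
    apply Finset.sum_congr rfl
    intro p hp
    rw [hts' p hp]
  rw [hBrw] at hsum2
  -- expectation of antichain cardinality
  have hE : σ.expect μ (fun I => (SkewShape.antichainCard I : ℝ))
      = ∑ p ∈ σ.cells, (1 : ℝ) * ∑ I ∈ σ.idealsFinset, (if σ.CanToggleOut I p then μ I else 0) := by
    rw [expect]
    rw [← σ.swap_gen μ σ.cells (fun _ => (1 : ℝ)) (fun p I => σ.CanToggleOut I p)]
    apply Finset.sum_congr rfl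
    intro I hI
    rw [σ.antichain_eq (σ.mem_idealsFinset.mp hI)]
  -- corner correction in summed form
  have hCorr : σ.cornerCorrection μ
      = - (∑ c ∈ σ.nwCorners, psi0 σ.a σ.b c *
            ∑ I ∈ σ.idealsFinset, (if NWInPath c I then μ I else 0))
        + ∑ c ∈ σ.seCorners, psi0 σ.a σ.b c *
            ∑ I ∈ σ.idealsFinset, (if SEInPath c I then μ I else 0) := by
    have h1 : ∀ c ∈ σ.nwCorners, σ.nwDisp c * σ.pr μ (NWInPath c)
        = -(psi0 σ.a σ.b c * ∑ I ∈ σ.idealsFinset, (if NWInPath c I then μ I else 0)) := by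
      intro c hc
      rw [σ.pr_eq]
      unfold nwDisp psi0
      ring
    have h2 : ∀ c ∈ σ.seCorners, σ.seDisp c * σ.pr μ (SEInPath c)
        = psi0 σ.a σ.b c * ∑ I ∈ σ.idealsFinset, (if SEInPath c I then μ I else 0) := by
      intro c hc
      rw [σ.pr_eq]
      unfold seDisp psi0
      ring
    rw [cornerCorrection, Finset.sum_congr rfl h1, Finset.sum_congr rfl h2,
      Finset.sum_neg_distrib]
  -- final algebra
  have hkey : (∑ p ∈ σ.cells, psi0 σ.a σ.b p *
        ∑ I ∈ σ.idealsFinset, (if σ.CanToggleOut I p then μ I else 0))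
      - (∑ p ∈ σ.cells, (psi0 σ.a σ.b p - (1 / (σ.a : ℝ) + 1 / (σ.b : ℝ)))
        * ∑ I ∈ σ.idealsFinset, (if σ.CanToggleOut I p then μ I else 0))
      = (1 / (σ.a : ℝ) + 1 / (σ.b : ℝ)) * ∑ p ∈ σ.cells, (1 : ℝ) *
          ∑ I ∈ σ.idealsFinset, (if σ.CanToggleOut I p then μ I else 0) := by
    rw [Finset.mul_sum, ← Finset.sum_sub_distrib]
    apply Finset.sum_congr rfl
    intro p hp
    ring
  have hfin : 1 + σ.cornerCorrection μ
      = (1 / (σ.a : ℝ) + 1 / (σ.b : ℝ)) * ∑ p ∈ σ.cells, (1 : ℝ) *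
          ∑ I ∈ σ.idealsFinset, (if σ.CanToggleOut I p then μ I else 0) := by
    rw [hCorr, ← hkey]
    linarith [hsum2]
  rw [hE, hfin]
  field_simp
  ring
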